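/- Along any solution of the reduced two-body system on [t₀, t*), the energy H and the Casimir C are conserved: for all s, t ∈ [t₀, t*), H(m₁(t),m₂(t),m₃(t),ξ(t),p(t)) = H(m₁(s),m₂(s),m₃(s),ξ(s),p(s)) and m₁(t)² + m₂(t)² + m₃(t)² = m₁(s)² + m₂(s)² + m₃(s)². -/

import Mathlib

open Filter Set

private lemma const_of_deriv_zero (t0 : ℝ) (tstar : EReal) (F : ℝ → ℝ)
    (hF : ∀ t : ℝ, t0 ≤ t → (t : EReal) < tstar → HasDerivAt F 0 t) :
    ∀ s t : ℝ, t0 ≤ s → (s : EReal) < tstar → t0 ≤ t → (t : EReal) < tstar →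
      F t = F s := by
  have key : ∀ s t : ℝ, t0 ≤ s → s ≤ t → (t : EReal) < tstar → F t = F s := by
    intro s t hs hst ht
    have hcont : ContinuousOn F (Icc s t) := fun x hx =>
      ((hF x (hs.trans hx.1)
        (lt_of_le_of_lt (EReal.coe_le_coe_iff.mpr hx.2) ht)).continuousAt).continuousWithinAt
    have hderiv : ∀ x ∈ Ico s t, HasDerivWithinAt F 0 (Ici x) x := fun x hx =>
      (hF x (hs.trans hx.1)
        (lt_of_le_of_lt (EReal.coe_le_coe_iff.mpr hx.2.le) ht)).hasDerivWithinAt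
    exact constant_of_has_deriv_right_zero hcont hderiv t ⟨hst, le_refl t⟩
  intro s t hs hst ht htt
  rcases le_total s t with h | h
  · exact key s t hs h htt
  · exact (key t s ht h hst).symm

/-- The energy (Hamiltonian) of the reduced two-body system on the sphere,
in the variables `(m₁, m₂, m₃, ξ, p)`. -/
noncomputable def energyH (m1 m2 m3 xi p : ℝ) : ℝ :=
  (1/2) * (m1^2 + m2^2 - 2*m1*p + 2*p^2 + xi*(-2 - 2*m2*m3 + m3^2*xi) + m3^2*(1 + xi^2))

/-- Along any solution of the reduced two-body system on `[t₀, t*)` (with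
`t* ∈ (t₀, ∞]`), the energy `H` and the Casimir `C = m₁² + m₂² + m₃²` are conserved. -/
theorem energy_and_casimir_conserved
    (t0 : ℝ) (tstar : EReal) (ht0 : (t0 : EReal) < tstar)
    (m1 m2 m3 xi p : ℝ → ℝ)
    (hm1 : ∀ t : ℝ, t0 ≤ t → (t : EReal) < tstar →
      HasDerivAt m1 (xi t * (-(m2 t)^2 + (m3 t)^2 + 2 * m2 t * m3 t * xi t)) t)
    (hm2 : ∀ t : ℝ, t0 ≤ t → (t : EReal) < tstar →
      HasDerivAt m2 (m1 t * m2 t * xi t - m3 t * p t - 2 * m1 t * m3 t * (xi t)^2) t)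
    (hm3 : ∀ t : ℝ, t0 ≤ t → (t : EReal) < tstar →
      HasDerivAt m3 (m2 t * p t - m1 t * m3 t * xi t) t)
    (hxi : ∀ t : ℝ, t0 ≤ t → (t : EReal) < tstar →
      HasDerivAt xi (-((xi t)^2 + 1) * (2 * p t - m1 t)) t)
    (hp : ∀ t : ℝ, t0 ≤ t → (t : EReal) < tstar →
      HasDerivAt p (-((xi t)^2 + 1) * (1 + m2 t * m3 t - 2 * (m3 t)^2 * xi t)) t) :
    ∀ s t : ℝ, t0 ≤ s → (s : EReal) < tstar → t0 ≤ t → (t : EReal) < tstar →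
      energyH (m1 t) (m2 t) (m3 t) (xi t) (p t)
        = energyH (m1 s) (m2 s) (m3 s) (xi s) (p s) ∧
      (m1 t)^2 + (m2 t)^2 + (m3 t)^2 = (m1 s)^2 + (m2 s)^2 + (m3 s)^2 := by
  have hE : ∀ t : ℝ, t0 ≤ t → (t : EReal) < tstar →
      HasDerivAt (fun u => energyH (m1 u) (m2 u) (m3 u) (xi u) (p u)) 0 t := by
    intro t h1 h2
    have a1 := hm1 t h1 h2
    have a2 := hm2 t h1 h2
    have a3 := hm3 t h1 h2
    have a4 := hxi t h1 h2
    have a5 := hp t h1 h2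
    have b1 := (a1.pow 2).add (a2.pow 2)
    have b2 := b1.sub ((a1.const_mul 2).mul a5)
    have b3 := b2.add ((a5.pow 2).const_mul 2)
    have b4 := (((a2.const_mul 2).mul a3).const_sub (-2)).add ((a3.pow 2).mul a4)
    have b5 := b3.add (a4.mul b4)
    have b6 := b5.add ((a3.pow 2).mul ((a4.pow 2).const_add 1))
    have h := b6.const_mul (1/2)
    simp only [energyH]
    convert h using 1
    · rfl
    · rfl
    · funext u
      simp only [Pi.add_apply, Pi.sub_apply, Pi.mul_apply, Pi.pow_apply]
    · simp only [Pi.add_apply, Pi.mul_apply, Pi.pow_apply]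
      push_cast
      ring
  have hC : ∀ t : ℝ, t0 ≤ t → (t : EReal) < tstar →
      HasDerivAt (fun u => (m1 u)^2 + (m2 u)^2 + (m3 u)^2) 0 t := by
    intro t h1 h2
    have a1 := hm1 t h1 h2
    have a2 := hm2 t h1 h2
    have a3 := hm3 t h1 h2
    have h := ((a1.pow 2).add (a2.pow 2)).add (a3.pow 2)
    convert h using 1
    · rfl
    · rfl
    · funext u
      simp only [Pi.add_apply, Pi.pow_apply]
    · push_cast
      ring
  intro s t hs hst ht htt
  exact ⟨const_of_deriv_zero t0 tstar _ hE s t hs hst ht htt,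
    const_of_deriv_zero t0 tstar _ hC s t hs hst ht htt⟩
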